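/- Let C be a binary self-dual code of length n with weight enumerator A_C(x,y) = ∑_c x^{n−wt(c)} y^{wt(c)}, and suppose C is singly-even with doubly-even subcode C₀. Then the weight enumerator of the shadow S = C₀^⊥ \ C satisfies S_C(x,y) = (1/|C|) · A_C(x+y, i(x−y)), where i² = −1. -/

import Mathlib

open MvPolynomial

/-- Weight enumerator of a set of binary words, as a polynomial in two variables. -/
noncomputable def wEnum (n : ℕ) (S : Set (Fin n → ZMod 2)) : MvPolynomial (Fin 2) ℂ :=
  ∑ c : Fin n → ZMod 2,
    Set.indicator S (fun c => (X 0) ^ (n - hammingNorm c) * (X 1) ^ (hammingNorm c)) c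

/-- The dual (orthogonal) set of a set of binary words. -/
def dualSet (n : ℕ) (S : Set (Fin n → ZMod 2)) : Set (Fin n → ZMod 2) :=
  {v | ∀ c ∈ S, ∑ i, v i * c i = 0}

section Aux
open Finset
open scoped Classical symmDiff

noncomputable def sgn (a : ZMod 2) : ℂ := (-1 : ℂ) ^ a.val

lemma zmod2_cases (a : ZMod 2) : a = 0 ∨ a = 1 := by revert a; decide

lemma sgn_zero : sgn 0 = 1 := by simp [sgn]

lemma sgn_one : sgn 1 = -1 := by
  simp [sgn, show (1 : ZMod 2).val = 1 from rfl]

lemma sgn_add (a b : ZMod 2) : sgn (a + b) = sgn a * sgn b := by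
  rcases zmod2_cases a with h | h <;> rcases zmod2_cases b with h' | h' <;>
    subst h <;> subst h' <;> norm_num [sgn_zero, sgn_one] <;> rfl

lemma sgn_sum {ι : Type*} (s : Finset ι) (f : ι → ZMod 2) :
    sgn (∑ i ∈ s, f i) = ∏ i ∈ s, sgn (f i) := by
  induction s using Finset.cons_induction with
  | empty => simp [sgn_zero]
  | cons a s ha ih => rw [Finset.sum_cons, Finset.prod_cons, sgn_add, ih]

lemma sgn_eq_one_iff {a : ZMod 2} : sgn a = 1 ↔ a = 0 := by
  rcases zmod2_cases a with h | h <;> subst h <;> simp [sgn_zero, sgn_one] <;> norm_num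

lemma ne_zero_iff_one {a : ZMod 2} : a ≠ 0 ↔ a = 1 := by
  rcases zmod2_cases a with h | h <;> subst h <;> simp

/-- hammingNorm of binary words plus twice the overlap equals sum of norms. -/
lemma wt_add (n : ℕ) (a b : Fin n → ZMod 2) :
    ∃ m : ℕ, hammingNorm (a + b) + 2 * m = hammingNorm a + hammingNorm b ∧
      (m : ZMod 2) = ∑ i, a i * b i := by
  classical
  set sA := Finset.univ.filter (fun i => a i ≠ 0) with hsA
  set sB := Finset.univ.filter (fun i => b i ≠ 0) with hsB
  refine ⟨(sA ∩ sB).card, ?_, ?_⟩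
  · have hsymm : Finset.univ.filter (fun i => (a + b) i ≠ 0) = sA ∆ sB := by
      ext i
      rcases zmod2_cases (a i) with h | h <;> rcases zmod2_cases (b i) with h' | h' <;>
        simp [hsA, hsB, Finset.mem_symmDiff, h, h'] <;> try decide
    have h1 : hammingNorm (a + b) = (sA ∆ sB).card := by
      rw [← hsymm]; simp [hammingNorm]
    have h2 : hammingNorm a = sA.card := rfl
    have h3 : hammingNorm b = sB.card := rfl
    have h4 : sA ∆ sB = (sA ∪ sB) \ (sA ∩ sB) := by
      ext i; simp [Finset.mem_symmDiff]; tauto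
    have h5 : (sA ∩ sB) ⊆ (sA ∪ sB) := (Finset.inter_subset_left).trans Finset.subset_union_left
    have h6 := Finset.card_union_add_card_inter sA sB
    have h7 : ((sA ∪ sB) \ (sA ∩ sB)).card = (sA ∪ sB).card - (sA ∩ sB).card :=
      Finset.card_sdiff_of_subset h5
    have h8 := Finset.card_le_card h5
    rw [h1, h2, h3, h4, h7]
    omega
  · have : ∀ i, a i * b i = if i ∈ sA ∩ sB then 1 else 0 := by
      intro i
      rcases zmod2_cases (a i) with h | h <;> rcases zmod2_cases (b i) with h' | h' <;>
        simp [hsA, hsB, h, h']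
    rw [Finset.sum_congr rfl (fun i _ => this i), Finset.sum_ite_mem,
      Finset.univ_inter, Finset.sum_const, nsmul_eq_mul, mul_one]

/-- Equivalence between subsets of `Fin n` and binary words. -/
noncomputable def fEquiv (n : ℕ) : Finset (Fin n) ≃ (Fin n → ZMod 2) where
  toFun t := fun j => if j ∈ t then 1 else 0
  invFun v := Finset.univ.filter (fun j => v j = 1)
  left_inv t := by
    ext j
    by_cases h : j ∈ t <;> simp [h]
  right_inv v := by
    funext j
    rcases zmod2_cases (v j) with h | h <;> simp [h]

lemma wt_fEquiv (n : ℕ) (t : Finset (Fin n)) : hammingNorm (fEquiv n t) = t.card := by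
  have : Finset.univ.filter (fun i => fEquiv n t i ≠ 0) = t := by
    ext i
    by_cases h : i ∈ t <;> simp [fEquiv, h]
  simp [hammingNorm]
  convert congrArg Finset.card this

lemma dot_fEquiv (n : ℕ) (t : Finset (Fin n)) (c : Fin n → ZMod 2) :
    ∑ i, fEquiv n t i * c i = ∑ i ∈ t, c i := by
  rw [show (fun i => fEquiv n t i * c i) = fun i => if i ∈ t then c i else 0 by
    funext i; by_cases h : i ∈ t <;> simp [fEquiv, h]]
  rw [Finset.sum_ite_mem, Finset.univ_inter]

/-- Key binomial expansion identity. -/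
lemma expand (n : ℕ) (c : Fin n → ZMod 2) :
    (X 0 + X 1 : MvPolynomial (Fin 2) ℂ) ^ (n - hammingNorm c) * (X 0 - X 1) ^ hammingNorm c
      = ∑ v : Fin n → ZMod 2,
          MvPolynomial.C (sgn (∑ i, v i * c i)) *
            (X 0 ^ (n - hammingNorm v) * X 1 ^ hammingNorm v) := by
  have step1 : (∏ j : Fin n, (MvPolynomial.C (sgn (c j)) * X 1 + X 0))
      = (X 0 + X 1 : MvPolynomial (Fin 2) ℂ) ^ (n - hammingNorm c) * (X 0 - X 1) ^ hammingNorm c := by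
    rw [← Finset.prod_filter_mul_prod_filter_not Finset.univ (fun j => c j = 1)]
    have e1 : ∀ j ∈ Finset.univ.filter (fun j => c j = 1),
        (MvPolynomial.C (sgn (c j)) * X 1 + X 0 : MvPolynomial (Fin 2) ℂ) = X 0 - X 1 := by
      intro j hj
      simp only [Finset.mem_filter] at hj
      rw [hj.2, sgn_one, map_neg, map_one]
      ring
    have e2 : ∀ j ∈ Finset.univ.filter (fun j => ¬ c j = 1),
        (MvPolynomial.C (sgn (c j)) * X 1 + X 0 : MvPolynomial (Fin 2) ℂ) = X 0 + X 1 := by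
      intro j hj
      simp only [Finset.mem_filter] at hj
      have : c j = 0 := by rcases zmod2_cases (c j) with h | h; exact h; exact absurd h hj.2
      rw [this, sgn_zero, map_one]
      ring
    rw [Finset.prod_congr rfl e1, Finset.prod_congr rfl e2, Finset.prod_const, Finset.prod_const]
    have hc1 : (Finset.univ.filter (fun j => c j = 1)).card = hammingNorm c := by
      simp only [hammingNorm]
      congr 1
      ext j
      simp [ne_zero_iff_one]
    have hc2 : (Finset.univ.filter (fun j => ¬ c j = 1)).card = n - hammingNorm c := by
      have := Finset.card_filter_add_card_filter_not (s := (Finset.univ : Finset (Fin n)))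
        (p := fun j => c j = 1)
      simp only [Finset.card_univ, Fintype.card_fin] at this
      omega
    rw [hc1, hc2, mul_comm]
  rw [← step1]
  rw [Fintype.prod_add]
  refine Fintype.sum_equiv (fEquiv n) _ _ ?_
  intro t
  have h1 : (∏ a ∈ t, (MvPolynomial.C (sgn (c a)) * X 1 : MvPolynomial (Fin 2) ℂ))
      = MvPolynomial.C (sgn (∑ i, fEquiv n t i * c i)) * X 1 ^ t.card := by
    rw [Finset.prod_mul_distrib, Finset.prod_const, ← map_prod, dot_fEquiv, sgn_sum]
  have h2 : (∏ a ∈ tᶜ, (X 0 : MvPolynomial (Fin 2) ℂ)) = X 0 ^ (n - t.card) := by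
    rw [Finset.prod_const, Finset.card_compl, Fintype.card_fin]
  rw [h1, h2, wt_fEquiv]
  ring

lemma I_pow_mod4 (w : ℕ) : Complex.I ^ w = Complex.I ^ (w % 4) := by
  conv_lhs => rw [← Nat.div_add_mod w 4]
  rw [pow_add, pow_mul, Complex.I_pow_four, one_pow, one_mul]

lemma zmod2_add_self (a : ZMod 2) : a + a = 0 := by revert a; decide

lemma pi_add_self {n : ℕ} (a : Fin n → ZMod 2) : a + a = 0 := by
  funext i; exact zmod2_add_self (a i)

section CS

variable {n : ℕ} {C : Submodule (ZMod 2) (Fin n → ZMod 2)}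
  (hsd : (C : Set (Fin n → ZMod 2)) = dualSet n C)

include hsd

lemma inner_zero (a b : Fin n → ZMod 2) (ha : a ∈ C) (hb : b ∈ C) :
    ∑ i, a i * b i = 0 := by
  have : a ∈ dualSet n C := by rw [← hsd]; exact ha
  exact this b hb

lemma wt_add_even (a b : Fin n → ZMod 2) (ha : a ∈ C) (hb : b ∈ C) :
    ∃ k : ℕ, hammingNorm (a + b) + 4 * k = hammingNorm a + hammingNorm b := by
  obtain ⟨m, hm, hm2⟩ := wt_add n a b
  rw [inner_zero hsd a b ha hb] at hm2
  have : (2 : ℕ) ∣ m := (ZMod.natCast_eq_zero_iff m 2).1 hm2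
  obtain ⟨k, rfl⟩ := this
  exact ⟨k, by omega⟩

lemma wt_even (a : Fin n → ZMod 2) (ha : a ∈ C) : hammingNorm a % 2 = 0 := by
  obtain ⟨m, hm, hm2⟩ := wt_add n a a
  rw [pi_add_self, hammingNorm_zero] at hm
  rw [inner_zero hsd a a ha ha] at hm2
  have : (2 : ℕ) ∣ m := (ZMod.natCast_eq_zero_iff m 2).1 hm2
  omega

lemma f_mul (v a b : Fin n → ZMod 2) (ha : a ∈ C) (hb : b ∈ C) :
    Complex.I ^ hammingNorm (a + b) * sgn (∑ i, v i * (a + b) i)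
      = (Complex.I ^ hammingNorm a * sgn (∑ i, v i * a i)) *
        (Complex.I ^ hammingNorm b * sgn (∑ i, v i * b i)) := by
  obtain ⟨k, hk⟩ := wt_add_even hsd a b ha hb
  have hI : Complex.I ^ hammingNorm a * Complex.I ^ hammingNorm b
      = Complex.I ^ hammingNorm (a + b) := by
    rw [← pow_add, ← hk, pow_add, pow_mul, Complex.I_pow_four, one_pow, mul_one]
  have hs : (∑ i, v i * (a + b) i) = (∑ i, v i * a i) + (∑ i, v i * b i) := by
    rw [← Finset.sum_add_distrib]
    refine Finset.sum_congr rfl fun i _ => ?_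
    simp [mul_add]
  rw [hs, sgn_add, ← hI]
  ring

lemma trivial_iff (hsing : ∃ c ∈ C, hammingNorm c % 4 = 2) (v : Fin n → ZMod 2) :
    (∀ c ∈ C, Complex.I ^ hammingNorm c * sgn (∑ i, v i * c i) = 1)
      ↔ v ∈ dualSet n {c | c ∈ C ∧ hammingNorm c % 4 = 0} \ (C : Set (Fin n → ZMod 2)) := by
  constructor
  · intro h
    constructor
    · intro c hc
      obtain ⟨hcC, hc4⟩ := hc
      have hI : Complex.I ^ hammingNorm c = 1 := by rw [I_pow_mod4, hc4, pow_zero]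
      have := h c hcC
      rw [hI, one_mul] at this
      exact sgn_eq_one_iff.1 this
    · intro hvC
      obtain ⟨c, hcC, hc4⟩ := hsing
      have hI : Complex.I ^ hammingNorm c = -1 := by rw [I_pow_mod4, hc4, Complex.I_sq]
      have h1 := h c hcC
      rw [hI] at h1
      have hvd : v ∈ dualSet n C := by rw [← hsd]; exact hvC
      rw [hvd c hcC, sgn_zero, mul_one] at h1
      norm_num at h1
  · rintro ⟨hv1, hv2⟩ c hc
    have heven := wt_even hsd c hc
    rcases Nat.even_or_odd (hammingNorm c / 2) with hE | hE
    · have h4 : hammingNorm c % 4 = 0 := by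
        obtain ⟨t, ht⟩ := hE; omega
      have hI : Complex.I ^ hammingNorm c = 1 := by rw [I_pow_mod4, h4, pow_zero]
      rw [hI, one_mul, hv1 c ⟨hc, h4⟩, sgn_zero]
    · have h4 : hammingNorm c % 4 = 2 := by
        obtain ⟨t, ht⟩ := hE; omega
      have hI : Complex.I ^ hammingNorm c = -1 := by rw [I_pow_mod4, h4, Complex.I_sq]
      -- find c₀ ∈ C with ⟨v,c₀⟩ = 1
      have hvd : v ∉ dualSet n C := by rw [← hsd]; exact hv2
      simp only [dualSet, Set.mem_setOf_eq, not_forall] at hvd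
      obtain ⟨c₀, hc₀C, hc₀⟩ := hvd
      have hc₀C' : c₀ ∈ C := hc₀C
      have hc₀4 : hammingNorm c₀ % 4 = 2 := by
        have he := wt_even hsd c₀ hc₀C'
        rcases Nat.even_or_odd (hammingNorm c₀ / 2) with hE' | hE'
        · exfalso
          have h40 : hammingNorm c₀ % 4 = 0 := by obtain ⟨t, ht⟩ := hE'; omega
          exact hc₀ (hv1 c₀ ⟨hc₀C', h40⟩)
        · obtain ⟨t, ht⟩ := hE'; omega
      have hsum : c + c₀ ∈ C := C.add_mem hc hc₀C'
      have hsum4 : hammingNorm (c + c₀) % 4 = 0 := by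
        obtain ⟨k, hk⟩ := wt_add_even hsd c c₀ hc hc₀C'
        omega
      have h0 := hv1 (c + c₀) ⟨hsum, hsum4⟩
      have hsplit : (∑ i, v i * (c + c₀) i) = (∑ i, v i * c i) + (∑ i, v i * c₀ i) := by
        rw [← Finset.sum_add_distrib]
        refine Finset.sum_congr rfl fun i _ => ?_
        simp [mul_add]
      rw [hsplit] at h0
      have hc₀1 : (∑ i, v i * c₀ i) = 1 := ne_zero_iff_one.1 hc₀
      rw [hc₀1] at h0
      have hvc : (∑ i, v i * c i) = 1 := by
        rcases zmod2_cases (∑ i, v i * c i) with h | h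
        · rw [h, zero_add] at h0; exact absurd h0 one_ne_zero
        · exact h
      rw [hvc, sgn_one, hI]
      norm_num

lemma charSum (hsing : ∃ c ∈ C, hammingNorm c % 4 = 2) (v : Fin n → ZMod 2) :
    ∑ c ∈ Finset.univ.filter (fun c => c ∈ C),
        Complex.I ^ hammingNorm c * sgn (∑ i, v i * c i)
      = if v ∈ dualSet n {c | c ∈ C ∧ hammingNorm c % 4 = 0} \ (C : Set (Fin n → ZMod 2))
        then ((Finset.univ.filter (fun c => c ∈ C)).card : ℂ) else 0 := by
  split_ifs with h
  · rw [Finset.sum_congr rfl (fun c hc => (trivial_iff hsd hsing v).2 h c (by simpa using hc)),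
      Finset.sum_const, nsmul_eq_mul, mul_one]
  · have h' := (not_iff_not.2 (trivial_iff hsd hsing v)).2 h
    push_neg at h'
    obtain ⟨a, haC, ha⟩ := h'
    have hfa : Complex.I ^ hammingNorm a * sgn (∑ i, v i * a i) = -1 := by
      have hsq := f_mul hsd v a a haC haC
      rw [pi_add_self, hammingNorm_zero, pow_zero, one_mul] at hsq
      have : (∑ i, v i * (0 : Fin n → ZMod 2) i) = 0 := by simp
      rw [this, sgn_zero] at hsq
      rcases mul_self_eq_one_iff.1 hsq.symm with h1 | h1
      · exact absurd h1 ha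
      · exact h1
    set f : (Fin n → ZMod 2) → ℂ := fun c => Complex.I ^ hammingNorm c * sgn (∑ i, v i * c i)
      with hf
    have key : ∑ c ∈ Finset.univ.filter (fun c => c ∈ C), f c
        = ∑ c ∈ Finset.univ.filter (fun c => c ∈ C), f (a + c) := by
      refine Finset.sum_nbij' (i := fun c => a + c) (j := fun c => a + c) ?_ ?_ ?_ ?_ ?_
      · intro c hc
        simp only [Finset.mem_filter, Finset.mem_univ, true_and] at hc ⊢
        exact C.add_mem haC hc
      · intro c hc
        simp only [Finset.mem_filter, Finset.mem_univ, true_and] at hc ⊢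
        exact C.add_mem haC hc
      · intro c _
        show a + (a + c) = c
        rw [← add_assoc, pi_add_self, zero_add]
      · intro c _
        show a + (a + c) = c
        rw [← add_assoc, pi_add_self, zero_add]
      · intro c hc
        show f c = f (a + (a + c))
        rw [← add_assoc, pi_add_self, zero_add]
    have key2 : ∑ c ∈ Finset.univ.filter (fun c => c ∈ C), f (a + c)
        = - ∑ c ∈ Finset.univ.filter (fun c => c ∈ C), f c := by
      rw [← Finset.sum_neg_distrib]
      refine Finset.sum_congr rfl fun c hc => ?_
      simp only [Finset.mem_filter, Finset.mem_univ, true_and] at hc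
      rw [hf]
      simp only
      rw [f_mul hsd v a c haC hc, hfa]
      ring
    linear_combination (1 / 2 : ℂ) * (key.trans key2)

end CS

end Aux

open scoped Classical in
theorem stmt11 (n : ℕ) (C : Submodule (ZMod 2) (Fin n → ZMod 2))
    (hsd : (C : Set (Fin n → ZMod 2)) = dualSet n C)
    (hsing : ∃ c ∈ C, hammingNorm c % 4 = 2) :
    wEnum n (dualSet n {c | c ∈ C ∧ hammingNorm c % 4 = 0} \ C) =
      MvPolynomial.C ((Nat.card C : ℂ))⁻¹ *
        (aeval ![X 0 + X 1, MvPolynomial.C Complex.I * (X 0 - X 1)]) (wEnum n C) := by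
  classical
  have hcards : Nat.card C = (Finset.univ.filter (fun c => c ∈ C)).card := by
    rw [Nat.card_eq_fintype_card, Fintype.card_subtype]
  have hpos : 0 < Nat.card C := Nat.card_pos
  have hcard : ((Nat.card C : ℂ)) ≠ 0 := by exact_mod_cast hpos.ne'
  have step : ∀ c : Fin n → ZMod 2,
      (aeval ![X 0 + X 1, MvPolynomial.C Complex.I * (X 0 - X 1)])
        (Set.indicator (C : Set (Fin n → ZMod 2))
          (fun c => (X 0 : MvPolynomial (Fin 2) ℂ) ^ (n - hammingNorm c) *
            (X 1) ^ (hammingNorm c)) c)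
      = ∑ v : Fin n → ZMod 2,
          (if c ∈ C then
            MvPolynomial.C (Complex.I ^ hammingNorm c * sgn (∑ i, v i * c i)) *
              ((X 0 : MvPolynomial (Fin 2) ℂ) ^ (n - hammingNorm v) * X 1 ^ hammingNorm v) else 0) := by
    intro c
    by_cases hc : c ∈ C
    · rw [Set.indicator_apply, if_pos (by exact hc)]
      simp only [hc, if_true]
      rw [map_mul, map_pow, map_pow, aeval_X, aeval_X,
        Matrix.cons_val_zero, Matrix.cons_val_one, Matrix.cons_val_zero,
        mul_pow, ← map_pow, mul_left_comm]
      rw [show ((X 0 + X 1 : MvPolynomial (Fin 2) ℂ) ^ (n - hammingNorm c) * (X 0 - X 1) ^ hammingNorm c) = _ from expand n c, Finset.mul_sum]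
      refine Finset.sum_congr rfl fun v _ => ?_
      rw [← mul_assoc, ← map_mul]
    · rw [Set.indicator_apply, if_neg (by exact hc)]
      simp only [hc, if_false, map_zero]
      rw [Finset.sum_const_zero]
  have hR : (aeval ![X 0 + X 1, MvPolynomial.C Complex.I * (X 0 - X 1)]) (wEnum n C)
      = ∑ v : Fin n → ZMod 2,
          MvPolynomial.C
            (if v ∈ dualSet n {c | c ∈ C ∧ hammingNorm c % 4 = 0} \ (C : Set (Fin n → ZMod 2))
              then ((Finset.univ.filter (fun c => c ∈ C)).card : ℂ) else 0) *
            ((X 0 : MvPolynomial (Fin 2) ℂ) ^ (n - hammingNorm v) * X 1 ^ hammingNorm v) := by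
    rw [wEnum, map_sum, Finset.sum_congr rfl (fun c _ => step c), Finset.sum_comm]
    refine Finset.sum_congr rfl fun v _ => ?_
    rw [← charSum hsd hsing v, ← Finset.sum_filter, map_sum, Finset.sum_mul]
  rw [hR, Finset.mul_sum, wEnum]
  refine Finset.sum_congr rfl fun v _ => ?_
  rw [Set.indicator_apply]
  split_ifs with hv
  · rw [← mul_assoc, ← map_mul, ← hcards, inv_mul_cancel₀ hcard, map_one, one_mul]
  · rw [map_zero, zero_mul, mul_zero]
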